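/- Let k be a field, n ≥ 1, and w = (a_1, …, a_n) ∈ ℕ^n with a_i ≥ 1 for all i. Let R = k[[x_1, …, x_n]] with orthogonal valuation v_w, let I be an ideal of R, and let {f_1, …, f_m} be a v-basis of I. Then every nonzero u ∈ I can be written as u = Σ_{j=1}^m λ_j f_j with λ_j ∈ R such that v_w(λ_j) + v_w(f_j) ≥ v_w(u) for every j with λ_j ≠ 0. -/

import Mathlib

/-- The orthogonal valuation `v_w` on `k[[x_1, …, x_n]]` associated to a weight vector
`w ∈ ℕⁿ`. -/
noncomputable def vw {k : Type*} [Field k] {n : ℕ} (w : Fin n → ℕ)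
    (f : MvPowerSeries (Fin n) k) : ℕ∞ :=
  ⨅ (d : Fin n →₀ ℕ) (_ : MvPowerSeries.coeff d f ≠ 0), ((∑ i, w i * d i : ℕ) : ℕ∞)

/-- The initial form `f_v` of `f`: the sum of the terms of `f` of weight exactly
`v_w(f)` (and `0` if `f = 0`). -/
noncomputable def initialForm {k : Type*} [Field k] {n : ℕ} (w : Fin n → ℕ)
    (f : MvPowerSeries (Fin n) k) : MvPowerSeries (Fin n) k :=
  fun d => if ((∑ i, w i * d i : ℕ) : ℕ∞) = vw w f then MvPowerSeries.coeff d f else 0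

/-- The set `I_v` of initial forms of nonzero elements of an ideal `I`. -/
def initialForms {k : Type*} [Field k] {n : ℕ} (w : Fin n → ℕ)
    (I : Ideal (MvPowerSeries (Fin n) k)) : Set (MvPowerSeries (Fin n) k) :=
  {g | ∃ f ∈ I, f ≠ 0 ∧ g = initialForm w f}

namespace Stmt15Aux

variable {k : Type*} [Field k] {n : ℕ} (w : Fin n → ℕ)

def wt (d : Fin n →₀ ℕ) : ℕ := ∑ i, w i * d i

lemma wt_add (a b : Fin n →₀ ℕ) : wt w (a + b) = wt w a + wt w b := by
  simp [wt, Finsupp.add_apply, mul_add, Finset.sum_add_distrib]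

lemma vw_le {f : MvPowerSeries (Fin n) k} {d : Fin n →₀ ℕ}
    (h : MvPowerSeries.coeff d f ≠ 0) : vw w f ≤ (wt w d : ℕ∞) :=
  iInf₂_le d h

lemma coeff_eq_zero_of_lt {f : MvPowerSeries (Fin n) k} {d : Fin n →₀ ℕ}
    (h : (wt w d : ℕ∞) < vw w f) : MvPowerSeries.coeff d f = 0 := by
  by_contra hc
  exact absurd (vw_le w hc) (not_le.mpr h)

lemma vw_zero : vw w (0 : MvPowerSeries (Fin n) k) = ⊤ := by
  simp [vw]

lemma exists_vnat {f : MvPowerSeries (Fin n) k} (hf : f ≠ 0) :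
    ∃ N : ℕ, vw w f = (N : ℕ∞) ∧ ∃ d, MvPowerSeries.coeff d f ≠ 0 ∧ wt w d = N := by
  have hne : ∃ N : ℕ, ∃ d, MvPowerSeries.coeff d f ≠ 0 ∧ wt w d = N := by
    obtain ⟨d, hd⟩ : ∃ d, MvPowerSeries.coeff d f ≠ 0 := by
      by_contra hc
      push_neg at hc
      exact hf (MvPowerSeries.ext fun d => by simpa using hc d)
    exact ⟨wt w d, ⟨d, hd, rfl⟩⟩
  set S : Set ℕ := {N | ∃ d, MvPowerSeries.coeff d f ≠ 0 ∧ wt w d = N}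
  have hSne : S.Nonempty := hne
  refine ⟨sInf S, ?_, Nat.sInf_mem hSne⟩
  apply le_antisymm
  · obtain ⟨d, hd, hwd⟩ := Nat.sInf_mem hSne
    have := vw_le w (k := k) hd
    rwa [hwd] at this
  · refine le_iInf₂ fun d hd => ?_
    have hm : wt w d ∈ S := ⟨d, hd, rfl⟩
    exact_mod_cast Nat.sInf_le hm

lemma coeff_initialForm (f : MvPowerSeries (Fin n) k) (d : Fin n →₀ ℕ) :
    MvPowerSeries.coeff d (initialForm w f) =
      if (wt w d : ℕ∞) = vw w f then MvPowerSeries.coeff d f else 0 := rfl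

lemma key {I : Ideal (MvPowerSeries (Fin n) k)} {m : ℕ}
    {f : Fin m → MvPowerSeries (Fin n) k}
    (hvbasis : Ideal.span (Set.range fun i => initialForm w (f i)) =
      Ideal.span (initialForms w I)) (v : MvPowerSeries (Fin n) k) :
    ∃ g : Fin m → MvPowerSeries (Fin n) k,
      (∀ j d, MvPowerSeries.coeff d (g j) ≠ 0 → (wt w d : ℕ∞) + vw w (f j) = vw w v) ∧
      (v ∈ I → ∀ d, (wt w d : ℕ∞) ≤ vw w v →
        MvPowerSeries.coeff d (v - ∑ j, g j * f j) = 0) := by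
  by_cases hv : v = 0
  · subst hv
    refine ⟨0, fun j d hd => ?_, fun _ d _ => by simp⟩
    simp at hd
  by_cases hvI : v ∈ I
  swap
  · refine ⟨0, fun j d hd => ?_, fun h => absurd h hvI⟩
    simp at hd
  obtain ⟨N₀, hN₀, -⟩ := exists_vnat w hv
  have hmem : initialForm w v ∈ Ideal.span (Set.range fun i => initialForm w (f i)) := by
    rw [hvbasis]
    exact Ideal.subset_span ⟨v, hvI, hv, rfl⟩
  obtain ⟨h, hh⟩ := (Submodule.mem_span_range_iff_exists_fun _).mp hmem
  set g : Fin m → MvPowerSeries (Fin n) k := fun j =>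
    (fun d => if (wt w d : ℕ∞) + vw w (f j) = (N₀ : ℕ∞)
      then MvPowerSeries.coeff d (h j) else 0) with hg
  have hgco : ∀ j d, MvPowerSeries.coeff d (g j) =
      if (wt w d : ℕ∞) + vw w (f j) = (N₀ : ℕ∞)
        then MvPowerSeries.coeff d (h j) else 0 := fun j d => rfl
  refine ⟨g, fun j d hd => ?_, fun _ d hdle => ?_⟩
  · rw [hgco] at hd
    rw [hN₀]
    by_contra hc
    simp [hc] at hd
  have hdle' : wt w d ≤ N₀ := by rw [hN₀] at hdle; exact_mod_cast hdle
  rw [map_sub, map_sum]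
  rcases lt_or_eq_of_le hdle' with hlt | heq
  · have hv0 : MvPowerSeries.coeff d v = 0 := by
      apply coeff_eq_zero_of_lt
      rw [hN₀]
      exact_mod_cast hlt
    rw [hv0]
    rw [Finset.sum_eq_zero, sub_zero]
    intro j _
    rw [MvPowerSeries.coeff_mul]
    apply Finset.sum_eq_zero
    intro p hp
    rw [Finset.HasAntidiagonal.mem_antidiagonal] at hp
    by_cases h1 : MvPowerSeries.coeff p.1 (g j) = 0
    · rw [h1, zero_mul]
    by_cases h2 : MvPowerSeries.coeff p.2 (f j) = 0
    · rw [h2, mul_zero]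
    exfalso
    have hc1 : (wt w p.1 : ℕ∞) + vw w (f j) = (N₀ : ℕ∞) := by
      rw [hgco] at h1
      by_contra hc
      simp [hc] at h1
    have hc2 : vw w (f j) ≤ (wt w p.2 : ℕ∞) := vw_le w h2
    have hwd : wt w p.1 + wt w p.2 = wt w d := by rw [← hp, wt_add]
    have : (N₀ : ℕ∞) ≤ (wt w d : ℕ∞) := by
      calc (N₀ : ℕ∞) = (wt w p.1 : ℕ∞) + vw w (f j) := hc1.symm
        _ ≤ (wt w p.1 : ℕ∞) + (wt w p.2 : ℕ∞) := by gcongr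
        _ = (wt w d : ℕ∞) := by rw [← hwd]; push_cast; ring
    have : N₀ ≤ wt w d := by exact_mod_cast this
    omega
  · have hsum : ∀ j, MvPowerSeries.coeff d (g j * f j) =
        MvPowerSeries.coeff d (h j * initialForm w (f j)) := by
      intro j
      rw [MvPowerSeries.coeff_mul, MvPowerSeries.coeff_mul]
      apply Finset.sum_congr rfl
      intro p hp
      rw [Finset.HasAntidiagonal.mem_antidiagonal] at hp
      have hwd : wt w p.1 + wt w p.2 = wt w d := by rw [← hp, wt_add]
      by_cases hc : (wt w p.1 : ℕ∞) + vw w (f j) = (N₀ : ℕ∞)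
      · have hg1 : MvPowerSeries.coeff p.1 (g j) = MvPowerSeries.coeff p.1 (h j) := by
          rw [hgco, if_pos hc]
        have hfv : vw w (f j) = (wt w p.2 : ℕ∞) := by
          have h2 : (wt w p.1 : ℕ∞) + vw w (f j)
              = (wt w p.1 : ℕ∞) + (wt w p.2 : ℕ∞) := by
            rw [hc]
            rw [← heq, ← hwd]
            push_cast
            ring
          exact WithTop.add_left_cancel (ENat.coe_ne_top _) h2
        have hi : MvPowerSeries.coeff p.2 (initialForm w (f j))
            = MvPowerSeries.coeff p.2 (f j) := by
          rw [coeff_initialForm, if_pos hfv.symm]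
        rw [hg1, hi]
      · have hg1 : MvPowerSeries.coeff p.1 (g j) = 0 := by rw [hgco, if_neg hc]
        have hi : MvPowerSeries.coeff p.2 (initialForm w (f j)) = 0 := by
          rw [coeff_initialForm, if_neg]
          intro hcc
          apply hc
          rw [← hcc, ← heq, ← hwd]
          push_cast
          ring
        rw [hg1, hi, zero_mul, mul_zero]
    have hvv : MvPowerSeries.coeff d v = MvPowerSeries.coeff d (initialForm w v) := by
      rw [coeff_initialForm, if_pos]
      rw [hN₀, heq]
    rw [hvv, ← hh]
    rw [Finset.sum_congr rfl (fun j _ => hsum j)]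
    rw [map_sum]
    simp only [smul_eq_mul]
    exact sub_self _

/-- The successive-approximation iteration. -/
noncomputable def iter {m : ℕ}
    (g : MvPowerSeries (Fin n) k → Fin m → MvPowerSeries (Fin n) k)
    (f : Fin m → MvPowerSeries (Fin n) k) (u : MvPowerSeries (Fin n) k) :
    ℕ → MvPowerSeries (Fin n) k := fun t =>
  Nat.rec u (fun _ prev => prev - ∑ j, g prev j * f j) t

end Stmt15Aux

/-- if all the weights are `≥ 1` and `{f_1, …, f_m}` is a v-basis of an
ideal `I` of `k[[x_1, …, x_n]]`, then every nonzero `u ∈ I` can be written as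
`u = Σ_j λ_j f_j` with `v_w(λ_j) + v_w(f_j) ≥ v_w(u)` whenever `λ_j ≠ 0`. -/
theorem stmt15 {k : Type*} [Field k] {n : ℕ} (hn : 1 ≤ n) (w : Fin n → ℕ)
    (hw : ∀ i, 1 ≤ w i)
    (I : Ideal (MvPowerSeries (Fin n) k))
    (m : ℕ) (f : Fin m → MvPowerSeries (Fin n) k)
    (hfI : ∀ i, f i ∈ I) (hf0 : ∀ i, f i ≠ 0)
    (hgen : Ideal.span (Set.range f) = I)
    (hvbasis : Ideal.span (Set.range fun i => initialForm w (f i)) =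
      Ideal.span (initialForms w I))
    (u : MvPowerSeries (Fin n) k) (huI : u ∈ I) (hu0 : u ≠ 0) :
    ∃ lam : Fin m → MvPowerSeries (Fin n) k,
      u = ∑ j, lam j * f j ∧
      ∀ j, lam j ≠ 0 → vw w u ≤ vw w (lam j) + vw w (f j) := by
  classical
  open Stmt15Aux in
  choose g hg1 hg2 using fun v => Stmt15Aux.key w hvbasis v
  set U : ℕ → MvPowerSeries (Fin n) k := Stmt15Aux.iter g f u with hUdef
  have hU0 : U 0 = u := rfl
  have hUs : ∀ t, U (t + 1) = U t - ∑ j, g (U t) j * f j := fun t => rfl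
  have hmemI : ∀ t, U t ∈ I := by
    intro t
    induction t with
    | zero => exact huI
    | succ t ih =>
      rw [hUs]
      exact I.sub_mem ih (Ideal.sum_mem _ fun j _ => I.mul_mem_left _ (hfI j))
  obtain ⟨N₀, hN₀, -⟩ := Stmt15Aux.exists_vnat w hu0
  choose N hN hNd using fun j => Stmt15Aux.exists_vnat w (hf0 j)
  -- the support of U t lives in weight ≥ N₀ + t
  have hlow : ∀ t d, MvPowerSeries.coeff d (U t) ≠ 0 → N₀ + t ≤ Stmt15Aux.wt w d := by
    intro t
    induction t with
    | zero =>
      intro d hd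
      rw [hU0] at hd
      have h1 := Stmt15Aux.vw_le w hd
      rw [hN₀] at h1
      simpa using (by exact_mod_cast h1 : N₀ ≤ Stmt15Aux.wt w d)
    | succ t ih =>
      intro d hd
      by_cases h0 : U t = 0
      · exfalso
        have hgz : ∀ jj, g 0 jj = 0 := by
          intro jj
          apply MvPowerSeries.ext
          intro e
          by_contra hc
          have h1 := hg1 0 jj e hc
          rw [Stmt15Aux.vw_zero, hN jj] at h1
          exact WithTop.add_ne_top.mpr ⟨ENat.coe_ne_top _, ENat.coe_ne_top _⟩ h1
        rw [hUs, h0] at hd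
        simp [hgz] at hd
      · obtain ⟨M, hM, dM, hdM, hwdM⟩ := Stmt15Aux.exists_vnat w h0
        have hMlb : N₀ + t ≤ M := by rw [← hwdM]; exact ih dM hdM
        rw [hUs] at hd
        have hnle : ¬ ((Stmt15Aux.wt w d : ℕ∞) ≤ vw w (U t)) := fun hle =>
          hd (hg2 (U t) (hmemI t) d hle)
        rw [hM] at hnle
        have hlt : M < Stmt15Aux.wt w d := by exact_mod_cast not_le.mp hnle
        omega
  -- support of the homogeneous pieces
  have hGsupp : ∀ t j d, MvPowerSeries.coeff d (g (U t) j) ≠ 0 →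
      N₀ + t ≤ Stmt15Aux.wt w d + N j := by
    intro t j d hd
    have h1 := hg1 (U t) j d hd
    by_cases h0 : U t = 0
    · exfalso
      rw [h0, Stmt15Aux.vw_zero, hN j] at h1
      exact WithTop.add_ne_top.mpr ⟨ENat.coe_ne_top _, ENat.coe_ne_top _⟩ h1
    · obtain ⟨M, hM, dM, hdM, hwdM⟩ := Stmt15Aux.exists_vnat w h0
      have hMlb : N₀ + t ≤ M := by rw [← hwdM]; exact hlow t dM hdM
      rw [hM, hN j, ← Nat.cast_add] at h1
      have h2 : Stmt15Aux.wt w d + N j = M := by exact_mod_cast h1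
      omega
  have hGzero : ∀ t j d, Stmt15Aux.wt w d + N j < t →
      MvPowerSeries.coeff d (g (U t) j) = 0 := by
    intro t j d hlt
    by_contra hc
    have := hGsupp t j d hc
    omega
  -- the limit coefficients
  set lam : Fin m → MvPowerSeries (Fin n) k := fun j =>
    (fun d => ∑ t ∈ Finset.range (Stmt15Aux.wt w d + N j + 1),
      MvPowerSeries.coeff d (g (U t) j)) with hlamdef
  have hlamco : ∀ j d, MvPowerSeries.coeff d (lam j) =
      ∑ t ∈ Finset.range (Stmt15Aux.wt w d + N j + 1),
        MvPowerSeries.coeff d (g (U t) j) := fun j d => rfl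
  have hstab : ∀ j d T, Stmt15Aux.wt w d + N j + 1 ≤ T →
      MvPowerSeries.coeff d (lam j) =
        ∑ t ∈ Finset.range T, MvPowerSeries.coeff d (g (U t) j) := by
    intro j d T hT
    rw [hlamco]
    apply Finset.sum_subset (Finset.range_subset_range.mpr hT)
    intro t ht hnt
    rw [Finset.mem_range] at hnt
    exact hGzero t j d (by omega)
  -- telescoping
  have htel : ∀ T, u = U T + ∑ j, (∑ t ∈ Finset.range T, g (U t) j) * f j := by
    intro T
    induction T with
    | zero => simp [hU0]
    | succ T ih =>
      rw [hUs]
      simp only [Finset.sum_range_succ, add_mul, Finset.sum_add_distrib]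
      conv_lhs => rw [ih]
      ring
  refine ⟨lam, ?_, ?_⟩
  · apply MvPowerSeries.ext
    intro d
    set B : ℕ := ∑ j, N j with hB
    have hNB : ∀ j : Fin m, N j ≤ B := fun j =>
      Finset.single_le_sum (fun i _ => Nat.zero_le (N i)) (Finset.mem_univ j)
    have hcU : MvPowerSeries.coeff d (U (Stmt15Aux.wt w d + B + 1)) = 0 := by
      by_contra hc
      have := hlow (Stmt15Aux.wt w d + B + 1) d hc
      omega
    conv_lhs => rw [htel (Stmt15Aux.wt w d + B + 1)]
    rw [map_add, hcU, zero_add, map_sum, map_sum]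
    apply Finset.sum_congr rfl
    intro j _
    rw [MvPowerSeries.coeff_mul, MvPowerSeries.coeff_mul]
    apply Finset.sum_congr rfl
    intro p hp
    rw [Finset.HasAntidiagonal.mem_antidiagonal] at hp
    have hwp : Stmt15Aux.wt w p.1 ≤ Stmt15Aux.wt w d := by
      rw [← hp, Stmt15Aux.wt_add]; omega
    congr 1
    rw [map_sum]
    exact (hstab j p.1 (Stmt15Aux.wt w d + B + 1) (by have := hNB j; omega)).symm
  · intro j hjne
    obtain ⟨L, hL, dL, hdL, hwdL⟩ := Stmt15Aux.exists_vnat w hjne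
    rw [hN₀, hL, hN j, ← Nat.cast_add]
    have hex : ∃ t ∈ Finset.range (Stmt15Aux.wt w dL + N j + 1),
        MvPowerSeries.coeff dL (g (U t) j) ≠ 0 := by
      by_contra hc
      push_neg at hc
      exact hdL (by rw [hlamco]; exact Finset.sum_eq_zero hc)
    obtain ⟨t, -, ht⟩ := hex
    have h1 := hGsupp t j dL ht
    have : N₀ ≤ L + N j := by omega
    exact_mod_cast this
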